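/- arXiv:1508.06418 — 2 statements merged into one kernel-verified Lean document; each statement's English description precedes it below -/
import Mathlib

section
/- Let R be an algebraic curvature tensor on an n-dimensional inner product space with all sectional curvatures nonnegative, and let φ be a positive semidefinite symmetric bilinear form with orthonormal eigenbasis {e_i} and eigenvalues λ_i ≥ 0. Then Σ_{i,j} (Ric(e_i,e_i) λ_i^2 − R(e_i,e_j,e_j,e_i) λ_i λ_j) ≥ 0. -/
open scoped RealInnerProductSpace

/-- for an algebraic curvature tensor `R` with nonnegative sectional
curvature and a positive semidefinite symmetric bilinear form `φ` with orthonormal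
eigenbasis `e` and eigenvalues `λᵢ ≥ 0`, one has
`∑ᵢ Ric(eᵢ,eᵢ) λᵢ² − ∑ᵢⱼ R(eᵢ,eⱼ,eⱼ,eᵢ) λᵢ λⱼ ≥ 0`. -/
theorem stmt2 {V : Type*} [NormedAddCommGroup V] [InnerProductSpace ℝ V]
    [FiniteDimensional ℝ V] {n : ℕ}
    (R : V →ₗ[ℝ] V →ₗ[ℝ] V →ₗ[ℝ] V →ₗ[ℝ] ℝ)
    (hR1 : ∀ x y z w : V, R x y z w = - R y x z w)
    (hR2 : ∀ x y z w : V, R x y z w = - R x y w z)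
    (hR3 : ∀ x y z w : V, R x y z w = R z w x y)
    (hB : ∀ x y z w : V, R x y z w + R y z x w + R z x y w = 0)
    (hsec : ∀ u v : V, ‖u‖ = 1 → ‖v‖ = 1 → ⟪u, v⟫ = 0 → 0 ≤ R u v v u)
    (e : OrthonormalBasis (Fin n) ℝ V)
    (φ : LinearMap.BilinForm ℝ V) (hφsymm : ∀ x y, φ x y = φ y x)
    (hφpsd : ∀ x, 0 ≤ φ x x)
    (lam : Fin n → ℝ) (hlam : ∀ i, 0 ≤ lam i)
    (hdiag : ∀ i j, φ (e i) (e j) = if i = j then lam i else 0) :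
    0 ≤ (∑ i, (∑ k, R (e i) (e k) (e k) (e i)) * lam i ^ 2)
      - (∑ i, ∑ j, R (e i) (e j) (e j) (e i) * (lam i * lam j)) := by
  set s : Fin n → Fin n → ℝ := fun i k => R (e i) (e k) (e k) (e i) with hs
  have hnn : ∀ i k, 0 ≤ s i k := by
    intro i k
    by_cases h : i = k
    · subst h
      have := hR1 (e i) (e i) (e i) (e i)
      simp only [hs]
      linarith
    · exact hsec (e i) (e k) (e.orthonormal.1 i) (e.orthonormal.1 k)
        (e.orthonormal.2 h)
  have hsym : ∀ i k, s i k = s k i := fun i k => hR3 (e i) (e k) (e k) (e i)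
  have h1 : (∑ i, (∑ k, s i k) * lam i ^ 2) = ∑ i, ∑ k, s i k * lam i ^ 2 := by
    refine Finset.sum_congr rfl fun i _ => ?_
    rw [Finset.sum_mul]
  have h2 : (∑ i, ∑ k, s i k * lam i ^ 2) = ∑ i, ∑ k, s i k * lam k ^ 2 := by
    rw [Finset.sum_comm]
    exact Finset.sum_congr rfl fun k _ => Finset.sum_congr rfl fun i _ => by
      rw [hsym]
  have expand : (∑ i, ∑ k, s i k * (lam i - lam k) ^ 2)
      = (∑ i, ∑ k, s i k * lam i ^ 2) + (∑ i, ∑ k, s i k * lam k ^ 2)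
        - 2 * (∑ i, ∑ k, s i k * (lam i * lam k)) := by
    have h : ∀ i k, s i k * (lam i - lam k) ^ 2
        = s i k * lam i ^ 2 + s i k * lam k ^ 2 - 2 * (s i k * (lam i * lam k)) := by
      intro i k; ring
    simp_rw [h, Finset.sum_sub_distrib, Finset.sum_add_distrib, ← Finset.mul_sum]
  have hpos : 0 ≤ ∑ i, ∑ k, s i k * (lam i - lam k) ^ 2 := by
    refine Finset.sum_nonneg fun i _ => Finset.sum_nonneg fun k _ => ?_
    exact mul_nonneg (hnn i k) (sq_nonneg _)
  have : (∑ i, (∑ k, s i k) * lam i ^ 2) - (∑ i, ∑ j, s i j * (lam i * lam j))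
      = (1/2) * ∑ i, ∑ k, s i k * (lam i - lam k) ^ 2 := by
    rw [expand, h1]; linarith [h2]
  simp only [hs] at this
  rw [this]
  positivity
end

section
/- Let R be an algebraic curvature tensor on a 3-dimensional inner product space with all sectional curvatures nonnegative. Then Ric(X,X) ≤ (s/2)·|X|^2 for every vector X. -/
open scoped RealInnerProductSpace

/-- The trace of a bilinear form over an orthonormal basis is basis-independent. -/
lemma sum_onb_inv {V : Type*} [NormedAddCommGroup V] [InnerProductSpace ℝ V]
    [FiniteDimensional ℝ V] {n : ℕ} (f g : OrthonormalBasis (Fin n) ℝ V)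
    (B : V →ₗ[ℝ] V →ₗ[ℝ] ℝ) : ∑ k, B (f k) (f k) = ∑ k, B (g k) (g k) := by
  have hrepr : ∀ x : V, x = ∑ i, ⟪g i, x⟫ • g i := fun x => by
    conv_lhs => rw [← g.sum_repr x]
    simp [g.repr_apply_apply]
  calc ∑ k, B (f k) (f k)
      = ∑ k, ∑ i, ∑ j, ⟪g i, f k⟫ * ⟪g j, f k⟫ * B (g i) (g j) := by
        refine Finset.sum_congr rfl fun k _ => ?_
        conv_lhs => rw [hrepr (f k)]
        simp only [map_sum, map_smul, LinearMap.sum_apply, LinearMap.smul_apply,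
          smul_eq_mul, Finset.mul_sum]
        rw [Finset.sum_comm]
        exact Finset.sum_congr rfl fun i _ => Finset.sum_congr rfl fun j _ => by ring
    _ = ∑ i, ∑ j, ∑ k, ⟪g i, f k⟫ * ⟪g j, f k⟫ * B (g i) (g j) := by
        rw [Finset.sum_comm]
        exact Finset.sum_congr rfl fun i _ => Finset.sum_comm
    _ = ∑ i, ∑ j, ⟪g i, g j⟫ * B (g i) (g j) := by
        refine Finset.sum_congr rfl fun i _ => Finset.sum_congr rfl fun j _ => ?_
        rw [← Finset.sum_mul]
        congr 1
        rw [← f.sum_inner_mul_inner (g i) (g j)]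
        exact Finset.sum_congr rfl fun k _ => by rw [real_inner_comm (g j) (f k)]
    _ = ∑ k, B (g k) (g k) := by
        simp only [orthonormal_iff_ite.mp g.orthonormal, ite_mul, one_mul, zero_mul]
        simp

/-- on a 3-dimensional inner product space, if all sectional curvatures of
the algebraic curvature tensor `R` are nonnegative, then `Ric(X,X) ≤ (s/2)·‖X‖²` for
every `X`, where `Ric(x,y) = ∑ₖ R(x,fₖ,fₖ,y)` and `s` is the scalar curvature. -/
theorem stmt5 {V : Type*} [NormedAddCommGroup V] [InnerProductSpace ℝ V]
    [FiniteDimensional ℝ V]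
    (R : V →ₗ[ℝ] V →ₗ[ℝ] V →ₗ[ℝ] V →ₗ[ℝ] ℝ)
    (hR1 : ∀ x y z w : V, R x y z w = - R y x z w)
    (hR2 : ∀ x y z w : V, R x y z w = - R x y w z)
    (hR3 : ∀ x y z w : V, R x y z w = R z w x y)
    (hB : ∀ x y z w : V, R x y z w + R y z x w + R z x y w = 0)
    (f : OrthonormalBasis (Fin 3) ℝ V)
    (hsec : ∀ u v : V, ‖u‖ = 1 → ‖v‖ = 1 → ⟪u, v⟫ = 0 → 0 ≤ R u v v u) :
    ∀ X : V, (∑ k, R X (f k) (f k) X)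
        ≤ (∑ i, ∑ k, R (f i) (f k) (f k) (f i)) / 2 * ‖X‖ ^ 2 := by
  intro X
  by_cases hX : X = 0
  · simp [hX]
  -- normalize X
  have hXnorm : ‖X‖ ≠ 0 := norm_ne_zero_iff.2 hX
  set Y : V := ‖X‖⁻¹ • X with hY
  have hYnorm : ‖Y‖ = 1 := norm_smul_inv_norm hX
  have hXY : X = ‖X‖ • Y := by
    rw [hY, smul_smul, mul_inv_cancel₀ hXnorm, one_smul]
  clear_value Y
  -- extend Y to an orthonormal basis g with g 0 = Y
  have hcard : Module.finrank ℝ V = Fintype.card (Fin 3) := by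
    rw [Module.finrank_eq_card_basis f.toBasis]
  have hON : Orthonormal ℝ (({0} : Set (Fin 3)).restrict fun _ => Y) :=
    ⟨fun _ => hYnorm, fun i j hij => absurd (Subsingleton.elim i j) hij⟩
  obtain ⟨g, hg⟩ := hON.exists_orthonormalBasis_extension_of_card_eq hcard
  have hg0 : g 0 = Y := hg 0 rfl
  -- bilinear forms
  have key1 : ∀ x : V, ∑ k, R x (f k) (f k) x = ∑ k, R x (g k) (g k) x := by
    intro x
    have := sum_onb_inv f g (LinearMap.mk₂ ℝ (fun u v => R x u v x)
      (by intro u u' v; simp) (by intro c u v; simp)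
      (by intro u v v'; simp) (by intro c u v; simp))
    simpa using this
  have key2 : ∀ z : V, ∑ i, R (f i) z z (f i) = ∑ i, R (g i) z z (g i) := by
    intro z
    have := sum_onb_inv f g (LinearMap.mk₂ ℝ (fun u v => R u z z v)
      (by intro u u' v; simp) (by intro c u v; simp)
      (by intro u v v'; simp) (by intro c u v; simp))
    simpa using this
  -- scalar curvature is basis independent
  have hs : ∑ i, ∑ k, R (f i) (f k) (f k) (f i) = ∑ i, ∑ k, R (g i) (g k) (g k) (g i) := by
    calc ∑ i, ∑ k, R (f i) (f k) (f k) (f i)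
        = ∑ i, ∑ k, R (f i) (g k) (g k) (f i) :=
          Finset.sum_congr rfl fun i _ => key1 (f i)
      _ = ∑ k, ∑ i, R (f i) (g k) (g k) (f i) := Finset.sum_comm
      _ = ∑ k, ∑ i, R (g i) (g k) (g k) (g i) :=
          Finset.sum_congr rfl fun k _ => key2 (g k)
      _ = ∑ i, ∑ k, R (g i) (g k) (g k) (g i) := Finset.sum_comm
  -- Ricci in terms of g
  have hric : ∑ k, R X (f k) (f k) X = ∑ k, R X (g k) (g k) X := key1 X
  rw [hric, hs]
  -- abbreviations
  have hRXY : ∀ u : V, R X u u X = ‖X‖ ^ 2 * R Y u u Y := by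
    intro u
    conv_lhs => rw [hXY]
    simp [mul_assoc, sq]
  have hdiag : ∀ u w : V, R u u w w = 0 := by
    intro u w
    have := hR1 u u w w
    linarith
  have hdiag2 : ∀ u w z : V, R u w z z = 0 := by
    intro u w z
    have := hR2 u w z z
    linarith
  have hsym : ∀ i j : Fin 3, R (g i) (g j) (g j) (g i) = R (g j) (g i) (g i) (g j) :=
    fun i j => hR3 (g i) (g j) (g j) (g i)
  -- sectional curvatures of pairs of g
  have hgnorm : ∀ i, ‖g i‖ = 1 := g.orthonormal.1
  have hsecg : ∀ i j : Fin 3, i ≠ j → 0 ≤ R (g i) (g j) (g j) (g i) := fun i j hij =>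
    hsec (g i) (g j) (hgnorm i) (hgnorm j) (g.orthonormal.2 hij)
  have hYY : ∀ u : V, R Y u u Y = R u Y Y u := fun u => hR3 Y u u Y
  -- expand sums over Fin 3
  simp only [Fin.sum_univ_three, hg0]
  have h00 : R Y Y Y Y = 0 := hdiag Y Y ▸ by
    have := hR1 Y Y Y Y; linarith
  have e1 : R X (g 1) (g 1) X = ‖X‖ ^ 2 * R Y (g 1) (g 1) Y := hRXY (g 1)
  have e2 : R X (g 2) (g 2) X = ‖X‖ ^ 2 * R Y (g 2) (g 2) Y := hRXY (g 2)
  have e0 : R X Y Y X = ‖X‖ ^ 2 * R Y Y Y Y := hRXY Y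
  have hd : ∀ i : Fin 3, R (g i) (g i) (g i) (g i) = 0 := fun i => by
    have := hR1 (g i) (g i) (g i) (g i); linarith
  have h0 : R Y Y Y Y = 0 := by have := hR1 Y Y Y Y; linarith
  have s01 := hsecg 0 1 (by decide)
  have s02 := hsecg 0 2 (by decide)
  have s12 := hsecg 1 2 (by decide)
  rw [hg0] at s01 s02
  have hy1 : R (g 1) Y Y (g 1) = R Y (g 1) (g 1) Y := (hR3 (g 1) Y Y (g 1))
  have hy2 : R (g 2) Y Y (g 2) = R Y (g 2) (g 2) Y := (hR3 (g 2) Y Y (g 2))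
  have h12 : R (g 2) (g 1) (g 1) (g 2) = R (g 1) (g 2) (g 2) (g 1) :=
    hR3 (g 2) (g 1) (g 1) (g 2)
  have hYYs : R Y Y Y Y = 0 := h0
  have hd1 : R (g 1) (g 1) (g 1) (g 1) = 0 := by
    have := hR1 (g 1) (g 1) (g 1) (g 1); linarith
  have hd2 : R (g 2) (g 2) (g 2) (g 2) = 0 := by
    have := hR1 (g 2) (g 2) (g 2) (g 2); linarith
  have hsq : (0:ℝ) ≤ ‖X‖ ^ 2 := sq_nonneg _
  rw [e0, e1, e2, hYYs, hy1, hy2, h12, hd1, hd2]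
  have key := mul_nonneg s12 hsq
  clear * - key
  nlinarith [key]
end
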